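/- The Ranked Pairs ZT voting method violates positive involvement: there exists a linear order L on the set of voters, a profile P, a candidate x ∈ RPZT_L(P), and a profile P' obtained from P by adding one new voter whose ballot ranks x in first place, such that x ∉ RPZT_L(P'). (A witness: P is the 5-voter profile on candidates {a,b,c,d} where the L-minimal voter has ballot cadb, two voters have ballot abdc, and two voters have ballot bdca, in which RPZT_L(P) = {b}; adding a new voter with ballot badc, where the L-minimal voter of the enlarged profile still has ballot cadb, yields RPZT_L(P') = {a}, so b loses.) -/

import Mathlib

open scoped Classical

/-- `r` is a strict linear order on the finite set `X`, relating only members of `X`. -/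
def IsLinOn (X : Finset ℕ) (r : ℕ → ℕ → Prop) : Prop :=
  (∀ a b, r a b → a ∈ X ∧ b ∈ X) ∧
  (∀ a, ¬ r a a) ∧
  (∀ a b c, r a b → r b c → r a c) ∧
  (∀ a ∈ X, ∀ b ∈ X, a ≠ b → r a b ∨ r b a)

/-- A profile assigns to each voter in a nonempty finite set of voters a strict linear
order (ballot) on a nonempty finite set of candidates.  Voters and candidates are both
drawn from the infinite set `ℕ`. -/
structure Profile where
  voters : Finset ℕ
  cands : Finset ℕ
  voters_nonempty : voters.Nonempty
  cands_nonempty : cands.Nonempty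
  ballot : ℕ → ℕ → ℕ → Prop
  ballot_lin : ∀ i ∈ voters, IsLinOn cands (ballot i)

/-- `F` is a voting method: it assigns to each profile a nonempty set of winners
among the candidates of the profile. -/
def VotingMethod (F : Profile → Finset ℕ) : Prop :=
  ∀ P : Profile, (F P).Nonempty ∧ F P ⊆ P.cands

/-- The ballot `r` ranks `x` in first place among the candidates in `X`. -/
def RanksFirst (X : Finset ℕ) (r : ℕ → ℕ → Prop) (x : ℕ) : Prop :=
  x ∈ X ∧ ∀ y ∈ X, y ≠ x → r x y

/-- `P'` is obtained from `P` by adding one new voter `j` whose ballot ranks `x` in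
first place. -/
def AddVoter (P P' : Profile) (j x : ℕ) : Prop :=
  P'.cands = P.cands ∧ j ∉ P.voters ∧ P'.voters = insert j P.voters ∧
  (∀ i ∈ P.voters, ∀ a b, (P'.ballot i a b ↔ P.ballot i a b)) ∧
  RanksFirst P.cands (P'.ballot j) x

/-- `F` satisfies positive involvement (PI). -/
def SatisfiesPI (F : Profile → Finset ℕ) : Prop :=
  ∀ (P P' : Profile) (j x : ℕ), x ∈ F P → AddVoter P P' j x → x ∈ F P'

/-- The margin of `a` over `b` in the profile `P`. -/
noncomputable def marginP (P : Profile) (a b : ℕ) : ℤ :=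
  ((P.voters.filter (fun i => P.ballot i a b)).card : ℤ) -
    ((P.voters.filter (fun i => P.ballot i b a)).card : ℤ)

/-- The set of pairs `(x,y)` of distinct candidates with nonnegative margin. -/
def rpPairs (P : Profile) : Set (ℕ × ℕ) :=
  {p | p.1 ∈ P.cands ∧ p.2 ∈ P.cands ∧ p.1 ≠ p.2 ∧ 0 ≤ marginP P p.1 p.2}

/-- `r` is a strict linear order on the set `S` of pairs. -/
def IsLinOnPairs (S : Set (ℕ × ℕ)) (r : ℕ × ℕ → ℕ × ℕ → Prop) : Prop :=
  (∀ p ∈ S, ¬ r p p) ∧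
  (∀ p ∈ S, ∀ q ∈ S, ∀ u ∈ S, r p q → r q u → r p u) ∧
  (∀ p ∈ S, ∀ q ∈ S, p ≠ q → r p q ∨ r q p)

/-- `p` has higher priority than `q` according to the margins of `P` with ties
broken by the tie-breaking order `T`. -/
def higherPri (P : Profile) (T : ℕ × ℕ → ℕ × ℕ → Prop) (p q : ℕ × ℕ) : Prop :=
  marginP P q.1 q.2 < marginP P p.1 p.2 ∨
    (marginP P p.1 p.2 = marginP P q.1 q.2 ∧ T p q)

/-- The relation (set of pairs) `R` is acyclic. -/
def AcyclicRel (R : Set (ℕ × ℕ)) : Prop :=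
  ∀ x, ¬ Relation.TransGen (fun u v => (u, v) ∈ R) x x

/-- One step of the Ranked Pairs procedure: lock in the pair `p` if doing so keeps the
relation acyclic; otherwise lock in the reverse pair. -/
noncomputable def rpStep (R : Set (ℕ × ℕ)) (p : ℕ × ℕ) : Set (ℕ × ℕ) :=
  if AcyclicRel (insert p R) then insert p R else insert (p.2, p.1) R

/-- Processing the list `l` of pairs in order by the Ranked Pairs procedure. -/
noncomputable def rpRanking (l : List (ℕ × ℕ)) : Set (ℕ × ℕ) :=
  l.foldl rpStep ∅

/-- `l` enumerates exactly the pairs of distinct candidates with nonnegative margin,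
in decreasing order of priority. -/
def IsPriorityList (P : Profile) (T : ℕ × ℕ → ℕ × ℕ → Prop) (l : List (ℕ × ℕ)) : Prop :=
  (∀ p, p ∈ l ↔ p ∈ rpPairs P) ∧ l.Pairwise (higherPri P T)

/-- `L` is a strict linear order on the (infinite) set `ℕ` of all voters. -/
def IsLinOrderUniv (L : ℕ → ℕ → Prop) : Prop :=
  (∀ a, ¬ L a a) ∧ (∀ a b c, L a b → L b c → L a c) ∧ (∀ a b, a ≠ b → L a b ∨ L b a)

/-- The lexicographic order on pairs derived from the ballot `b`. -/
def lexT (b : ℕ → ℕ → Prop) (p q : ℕ × ℕ) : Prop :=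
  b p.1 q.1 ∨ (p.1 = q.1 ∧ b p.2 q.2)

/-- The Ranked Pairs ZT winners for the linear order `L` on voters: where `i` is the
`L`-minimal voter of `P`, `x` wins iff `x` is the maximum of the Ranked Pairs ranking
for `P` with the tie-breaking order being the lexicographic order derived from `i`'s
ballot. -/
noncomputable def RPZT (L : ℕ → ℕ → Prop) (P : Profile) : Finset ℕ :=
  P.cands.filter (fun x =>
    ∃ i ∈ P.voters, (∀ j ∈ P.voters, j ≠ i → L i j) ∧
      ∃ l : List (ℕ × ℕ), IsPriorityList P (lexT (P.ballot i)) l ∧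
        ∀ y ∈ P.cands, y ≠ x → (x, y) ∈ rpRanking l)


/-! ### Auxiliary constructions -/

/-- The strict order on `ℕ` induced by position in the list `l`. -/
def ordOf (l : List ℕ) (x y : ℕ) : Prop :=
  x ∈ l ∧ y ∈ l ∧ l.idxOf x < l.idxOf y

instance (l : List ℕ) (x y : ℕ) : Decidable (ordOf l x y) := by
  unfold ordOf; infer_instance

lemma ordOf_lin (l : List ℕ) : IsLinOn l.toFinset (ordOf l) := by
  refine ⟨fun a b h => ⟨List.mem_toFinset.2 h.1, List.mem_toFinset.2 h.2.1⟩,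
    fun a h => lt_irrefl _ h.2.2,
    fun a b c h1 h2 => ⟨h1.1, h2.2.1, h1.2.2.trans h2.2.2⟩,
    fun a ha b hb hne => ?_⟩
  rw [List.mem_toFinset] at ha hb
  rcases lt_trichotomy (l.idxOf a) (l.idxOf b) with h | h | h
  · exact Or.inl ⟨ha, hb, h⟩
  · exact absurd ((List.idxOf_inj ha).1 h) hne
  · exact Or.inr ⟨hb, ha, h⟩

lemma lin_helper (li : List ℕ) (h2 : li.toFinset = {0,1,2,3}) :
    IsLinOn {0,1,2,3} (ordOf li) := h2 ▸ ordOf_lin li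

/-- The ballots. -/
def bal (i : ℕ) : List ℕ :=
  if i = 0 then [2,0,3,1]
  else if i = 1 ∨ i = 2 then [0,1,3,2]
  else if i = 3 ∨ i = 4 then [1,3,2,0]
  else [1,0,3,2]

def P1 : Profile where
  voters := {0,1,2,3,4}
  cands := {0,1,2,3}
  voters_nonempty := ⟨0, by decide⟩
  cands_nonempty := ⟨0, by decide⟩
  ballot := fun i => ordOf (bal i)
  ballot_lin := by
    intro i hi
    fin_cases hi <;> exact lin_helper _ (by decide)

def P2 : Profile where
  voters := {0,1,2,3,4,5}
  cands := {0,1,2,3}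
  voters_nonempty := ⟨0, by decide⟩
  cands_nonempty := ⟨0, by decide⟩
  ballot := fun i => ordOf (bal i)
  ballot_lin := by
    intro i hi
    fin_cases hi <;> exact lin_helper _ (by decide)

instance instB1 (i a b : ℕ) : Decidable (P1.ballot i a b) :=
  inferInstanceAs (Decidable (ordOf (bal i) a b))

instance instB2 (i a b : ℕ) : Decidable (P2.ballot i a b) :=
  inferInstanceAs (Decidable (ordOf (bal i) a b))

lemma filter_inst (s : Finset ℕ) (p : ℕ → Prop) (h1 h2 : DecidablePred p) :
    @Finset.filter _ p h1 s = @Finset.filter _ p h2 s := by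
  rw [Subsingleton.elim h1 h2]

def mtab1 : ℕ → ℕ → ℤ := fun a b =>
  ((([[0,1,-1,1],[-1,0,3,3],[1,-3,0,-3],[-1,-3,3,0]] : List (List ℤ)).getD a []).getD b 0)

def mtab2 : ℕ → ℕ → ℤ := fun a b =>
  ((([[0,0,0,2],[0,0,4,4],[0,-4,0,-4],[-2,-4,4,0]] : List (List ℤ)).getD a []).getD b 0)

lemma M1 (a b : ℕ) (ha : a < 4) (hb : b < 4) : marginP P1 a b = mtab1 a b := by
  unfold marginP
  rw [filter_inst P1.voters _ _ (fun i => instB1 i a b),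
      filter_inst P1.voters _ _ (fun i => instB1 i b a)]
  interval_cases a <;> interval_cases b <;> decide

lemma M2 (a b : ℕ) (ha : a < 4) (hb : b < 4) : marginP P2 a b = mtab2 a b := by
  unfold marginP
  rw [filter_inst P2.voters _ _ (fun i => instB2 i a b),
      filter_inst P2.voters _ _ (fun i => instB2 i b a)]
  interval_cases a <;> interval_cases b <;> decide

def L1 : List (ℕ × ℕ) := [(3,2),(1,2),(1,3),(2,0),(0,3),(0,1)]
def L2 : List (ℕ × ℕ) := [(3,2),(1,2),(1,3),(0,3),(2,0),(0,2),(0,1),(1,0)]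

lemma cands1 : P1.cands = {0,1,2,3} := rfl
lemma cands2 : P2.cands = {0,1,2,3} := rfl

lemma rpPairs1 : ∀ p, p ∈ L1 ↔ p ∈ rpPairs P1 := by
  rintro ⟨a, b⟩
  constructor
  · intro hp
    fin_cases hp
    · exact ⟨by decide, by decide, by decide, by rw [M1 3 2 (by norm_num) (by norm_num)]; decide⟩
    · exact ⟨by decide, by decide, by decide, by rw [M1 1 2 (by norm_num) (by norm_num)]; decide⟩
    · exact ⟨by decide, by decide, by decide, by rw [M1 1 3 (by norm_num) (by norm_num)]; decide⟩
    · exact ⟨by decide, by decide, by decide, by rw [M1 2 0 (by norm_num) (by norm_num)]; decide⟩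
    · exact ⟨by decide, by decide, by decide, by rw [M1 0 3 (by norm_num) (by norm_num)]; decide⟩
    · exact ⟨by decide, by decide, by decide, by rw [M1 0 1 (by norm_num) (by norm_num)]; decide⟩
  · rintro ⟨ha, hb, hne, hm⟩
    rw [cands1] at ha hb
    simp only [Finset.mem_insert, Finset.mem_singleton] at ha hb
    have ha4 : a < 4 := by omega
    have hb4 : b < 4 := by omega
    rw [M1 a b ha4 hb4] at hm
    rcases ha with rfl | rfl | rfl | rfl <;> rcases hb with rfl | rfl | rfl | rfl <;>
      first
        | exact absurd rfl hne
        | exact absurd hm (by decide)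
        | decide

lemma rpPairs2 : ∀ p, p ∈ L2 ↔ p ∈ rpPairs P2 := by
  rintro ⟨a, b⟩
  constructor
  · intro hp
    fin_cases hp
    · exact ⟨by decide, by decide, by decide, by rw [M2 3 2 (by norm_num) (by norm_num)]; decide⟩
    · exact ⟨by decide, by decide, by decide, by rw [M2 1 2 (by norm_num) (by norm_num)]; decide⟩
    · exact ⟨by decide, by decide, by decide, by rw [M2 1 3 (by norm_num) (by norm_num)]; decide⟩
    · exact ⟨by decide, by decide, by decide, by rw [M2 0 3 (by norm_num) (by norm_num)]; decide⟩
    · exact ⟨by decide, by decide, by decide, by rw [M2 2 0 (by norm_num) (by norm_num)]; decide⟩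
    · exact ⟨by decide, by decide, by decide, by rw [M2 0 2 (by norm_num) (by norm_num)]; decide⟩
    · exact ⟨by decide, by decide, by decide, by rw [M2 0 1 (by norm_num) (by norm_num)]; decide⟩
    · exact ⟨by decide, by decide, by decide, by rw [M2 1 0 (by norm_num) (by norm_num)]; decide⟩
  · rintro ⟨ha, hb, hne, hm⟩
    rw [cands2] at ha hb
    simp only [Finset.mem_insert, Finset.mem_singleton] at ha hb
    have ha4 : a < 4 := by omega
    have hb4 : b < 4 := by omega
    rw [M2 a b ha4 hb4] at hm
    rcases ha with rfl | rfl | rfl | rfl <;> rcases hb with rfl | rfl | rfl | rfl <;>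
      first
        | exact absurd rfl hne
        | exact absurd hm (by decide)
        | decide

/-- a decidable surrogate for `higherPri`. -/
def hpD (tab : ℕ → ℕ → ℤ) (tl : List ℕ) (p q : ℕ × ℕ) : Prop :=
  p.1 < 4 ∧ p.2 < 4 ∧ q.1 < 4 ∧ q.2 < 4 ∧
    (tab q.1 q.2 < tab p.1 p.2 ∨ (tab p.1 p.2 = tab q.1 q.2 ∧ lexT (ordOf tl) p q))

instance (tab : ℕ → ℕ → ℤ) (tl : List ℕ) (p q : ℕ × ℕ) : Decidable (hpD tab tl p q) := by
  unfold hpD lexT; infer_instance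

lemma pairwise1 : L1.Pairwise (higherPri P1 (lexT (P1.ballot 0))) := by
  have h : L1.Pairwise (hpD mtab1 [2,0,3,1]) := by decide
  refine h.imp ?_
  rintro p q ⟨h1, h2, h3, h4, h5⟩
  unfold higherPri
  rw [M1 p.1 p.2 h1 h2, M1 q.1 q.2 h3 h4]
  have hb : P1.ballot 0 = ordOf [2,0,3,1] := rfl
  rw [hb]
  exact h5

lemma pairwise2 : L2.Pairwise (higherPri P2 (lexT (P2.ballot 0))) := by
  have h : L2.Pairwise (hpD mtab2 [2,0,3,1]) := by decide
  refine h.imp ?_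
  rintro p q ⟨h1, h2, h3, h4, h5⟩
  unfold higherPri
  rw [M2 p.1 p.2 h1 h2, M2 q.1 q.2 h3 h4]
  have hb : P2.ballot 0 = ordOf [2,0,3,1] := rfl
  rw [hb]
  exact h5

lemma acyclic_of_rank (f : ℕ → ℕ) (S : Set (ℕ × ℕ)) (h : ∀ p ∈ S, f p.1 < f p.2) :
    AcyclicRel S := by
  intro x hx
  have key : ∀ y, Relation.TransGen (fun u v => (u, v) ∈ S) x y → f x < f y := by
    intro y hy
    induction hy with
    | single h' => exact h _ h'
    | tail _ h' ih => exact ih.trans (h _ h')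
  exact lt_irrefl _ (key x hx)

lemma acyclic_subset {S T : Set (ℕ × ℕ)} (h : AcyclicRel S) (hsub : T ⊆ S) :
    AcyclicRel T := fun x hx =>
  h x (Relation.TransGen.mono (fun _ _ hab => hsub hab) x x hx)

def F1 : Set (ℕ × ℕ) :=
  insert (1,0) (insert (3,0) (insert (0,3) (insert (2,0) (insert (1,3) (insert (1,2)
    (insert (3,2) ∅))))))

lemma hF1 : AcyclicRel (insert (1,0) (insert (3,0) (insert (2,0) (insert (1,3)
    (insert (1,2) (insert ((3,2) : ℕ × ℕ) ∅)))))) := by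
  apply acyclic_of_rank (fun n => [3,0,2,1].getD n 0)
  rintro ⟨a, b⟩ hp
  simp only [Set.mem_insert_iff, Set.mem_empty_iff_false, or_false, Prod.mk.injEq] at hp
  rcases hp with ⟨rfl,rfl⟩|⟨rfl,rfl⟩|⟨rfl,rfl⟩|⟨rfl,rfl⟩|⟨rfl,rfl⟩|⟨rfl,rfl⟩ <;> decide

lemma eval1 : rpRanking L1 = insert (1,0) (insert (3,0) (insert (2,0) (insert (1,3)
    (insert (1,2) (insert ((3,2) : ℕ × ℕ) ∅))))) := by
  have sub : ∀ S T : Set (ℕ × ℕ), (∀ q, q ∈ S → q ∈ T) → S ⊆ T := fun _ _ h => h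
  unfold rpRanking L1
  simp only [List.foldl_cons, List.foldl_nil]
  rw [show rpStep ∅ ((3,2) : ℕ × ℕ) = insert (3,2) ∅ from by
    rw [rpStep, if_pos (acyclic_subset hF1 (sub _ _ (by intro q hq; simp only
      [Set.mem_insert_iff, Set.mem_empty_iff_false] at hq ⊢; tauto)))]]
  rw [show rpStep (insert ((3,2) : ℕ × ℕ) ∅) (1,2) = insert (1,2) (insert (3,2) ∅) from by
    rw [rpStep, if_pos (acyclic_subset hF1 (sub _ _ (by intro q hq; simp only
      [Set.mem_insert_iff, Set.mem_empty_iff_false] at hq ⊢; tauto)))]]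
  rw [show rpStep (insert (1,2) (insert ((3,2) : ℕ × ℕ) ∅)) (1,3)
      = insert (1,3) (insert (1,2) (insert (3,2) ∅)) from by
    rw [rpStep, if_pos (acyclic_subset hF1 (sub _ _ (by intro q hq; simp only
      [Set.mem_insert_iff, Set.mem_empty_iff_false] at hq ⊢; tauto)))]]
  rw [show rpStep (insert (1,3) (insert (1,2) (insert ((3,2) : ℕ × ℕ) ∅))) (2,0)
      = insert (2,0) (insert (1,3) (insert (1,2) (insert (3,2) ∅))) from by
    rw [rpStep, if_pos (acyclic_subset hF1 (sub _ _ (by intro q hq; simp only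
      [Set.mem_insert_iff, Set.mem_empty_iff_false] at hq ⊢; tauto)))]]
  rw [show rpStep (insert (2,0) (insert (1,3) (insert (1,2) (insert ((3,2) : ℕ × ℕ) ∅)))) (0,3)
      = insert (3,0) (insert (2,0) (insert (1,3) (insert (1,2) (insert (3,2) ∅)))) from by
    rw [rpStep, if_neg ?_]
    intro h
    exact h 0 (Relation.TransGen.tail (Relation.TransGen.tail
      (Relation.TransGen.single (show ((0:ℕ),(3:ℕ)) ∈ _ by simp))
      (show ((3:ℕ),(2:ℕ)) ∈ _ by simp)) (show ((2:ℕ),(0:ℕ)) ∈ _ by simp))]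
  rw [show rpStep (insert (3,0) (insert (2,0) (insert (1,3) (insert (1,2)
        (insert ((3,2) : ℕ × ℕ) ∅))))) (0,1)
      = insert (1,0) (insert (3,0) (insert (2,0) (insert (1,3) (insert (1,2)
        (insert (3,2) ∅))))) from by
    rw [rpStep, if_neg ?_]
    intro h
    exact h 0 (Relation.TransGen.tail (Relation.TransGen.tail
      (Relation.TransGen.single (show ((0:ℕ),(1:ℕ)) ∈ _ by simp))
      (show ((1:ℕ),(3:ℕ)) ∈ _ by simp)) (show ((3:ℕ),(0:ℕ)) ∈ _ by simp))]

lemma hF2 : AcyclicRel (insert (0,1) (insert (0,1) (insert (0,2) (insert (0,2)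
    (insert (0,3) (insert (1,3) (insert (1,2) (insert ((3,2) : ℕ × ℕ) ∅)))))))) := by
  apply acyclic_of_rank (fun n => [0,1,3,2].getD n 0)
  rintro ⟨a, b⟩ hp
  simp only [Set.mem_insert_iff, Set.mem_empty_iff_false, or_false, Prod.mk.injEq] at hp
  rcases hp with ⟨rfl,rfl⟩|⟨rfl,rfl⟩|⟨rfl,rfl⟩|⟨rfl,rfl⟩|⟨rfl,rfl⟩|⟨rfl,rfl⟩|⟨rfl,rfl⟩|⟨rfl,rfl⟩ <;>
    decide

lemma eval2 : rpRanking L2 = insert (0,1) (insert (0,1) (insert (0,2) (insert (0,2)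
    (insert (0,3) (insert (1,3) (insert (1,2) (insert ((3,2) : ℕ × ℕ) ∅))))))) := by
  have sub : ∀ S T : Set (ℕ × ℕ), (∀ q, q ∈ S → q ∈ T) → S ⊆ T := fun _ _ h => h
  unfold rpRanking L2
  simp only [List.foldl_cons, List.foldl_nil]
  rw [show rpStep ∅ ((3,2) : ℕ × ℕ) = insert (3,2) ∅ from by
    rw [rpStep, if_pos (acyclic_subset hF2 (sub _ _ (by intro q hq; simp only
      [Set.mem_insert_iff, Set.mem_empty_iff_false] at hq ⊢; tauto)))]]
  rw [show rpStep (insert ((3,2) : ℕ × ℕ) ∅) (1,2) = insert (1,2) (insert (3,2) ∅) from by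
    rw [rpStep, if_pos (acyclic_subset hF2 (sub _ _ (by intro q hq; simp only
      [Set.mem_insert_iff, Set.mem_empty_iff_false] at hq ⊢; tauto)))]]
  rw [show rpStep (insert (1,2) (insert ((3,2) : ℕ × ℕ) ∅)) (1,3)
      = insert (1,3) (insert (1,2) (insert (3,2) ∅)) from by
    rw [rpStep, if_pos (acyclic_subset hF2 (sub _ _ (by intro q hq; simp only
      [Set.mem_insert_iff, Set.mem_empty_iff_false] at hq ⊢; tauto)))]]
  rw [show rpStep (insert (1,3) (insert (1,2) (insert ((3,2) : ℕ × ℕ) ∅))) (0,3)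
      = insert (0,3) (insert (1,3) (insert (1,2) (insert (3,2) ∅))) from by
    rw [rpStep, if_pos (acyclic_subset hF2 (sub _ _ (by intro q hq; simp only
      [Set.mem_insert_iff, Set.mem_empty_iff_false] at hq ⊢; tauto)))]]
  rw [show rpStep (insert (0,3) (insert (1,3) (insert (1,2) (insert ((3,2) : ℕ × ℕ) ∅)))) (2,0)
      = insert (0,2) (insert (0,3) (insert (1,3) (insert (1,2) (insert (3,2) ∅)))) from by
    rw [rpStep, if_neg ?_]
    intro h
    exact h 2 (Relation.TransGen.tail (Relation.TransGen.tail
      (Relation.TransGen.single (show ((2:ℕ),(0:ℕ)) ∈ _ by simp))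
      (show ((0:ℕ),(3:ℕ)) ∈ _ by simp)) (show ((3:ℕ),(2:ℕ)) ∈ _ by simp))]
  rw [show rpStep (insert (0,2) (insert (0,3) (insert (1,3) (insert (1,2)
        (insert ((3,2) : ℕ × ℕ) ∅))))) (0,2)
      = insert (0,2) (insert (0,2) (insert (0,3) (insert (1,3) (insert (1,2)
        (insert (3,2) ∅))))) from by
    rw [rpStep, if_pos (acyclic_subset hF2 (sub _ _ (by intro q hq; simp only
      [Set.mem_insert_iff, Set.mem_empty_iff_false] at hq ⊢; tauto)))]]
  rw [show rpStep (insert (0,2) (insert (0,2) (insert (0,3) (insert (1,3) (insert (1,2)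
        (insert ((3,2) : ℕ × ℕ) ∅)))))) (0,1)
      = insert (0,1) (insert (0,2) (insert (0,2) (insert (0,3) (insert (1,3) (insert (1,2)
        (insert (3,2) ∅)))))) from by
    rw [rpStep, if_pos (acyclic_subset hF2 (sub _ _ (by intro q hq; simp only
      [Set.mem_insert_iff, Set.mem_empty_iff_false] at hq ⊢; tauto)))]]
  rw [show rpStep (insert (0,1) (insert (0,2) (insert (0,2) (insert (0,3) (insert (1,3)
        (insert (1,2) (insert ((3,2) : ℕ × ℕ) ∅))))))) (1,0)
      = insert (0,1) (insert (0,1) (insert (0,2) (insert (0,2) (insert (0,3) (insert (1,3)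
        (insert (1,2) (insert (3,2) ∅))))))) from by
    rw [rpStep, if_neg ?_]
    intro h
    exact h 1 (Relation.TransGen.tail
      (Relation.TransGen.single (show ((1:ℕ),(0:ℕ)) ∈ _ by simp))
      (show ((0:ℕ),(1:ℕ)) ∈ _ by simp))]

lemma lexT_asym (tl : List ℕ) (p q : ℕ × ℕ)
    (h1 : lexT (ordOf tl) p q) (h2 : lexT (ordOf tl) q p) : False := by
  obtain ⟨p1, p2⟩ := p
  obtain ⟨q1, q2⟩ := q
  simp only [lexT, ordOf] at h1 h2
  rcases h1 with ⟨-,-,h1⟩ | ⟨e1, -, -, h1⟩ <;> rcases h2 with ⟨-,-,h2⟩ | ⟨e2, -, -, h2⟩ <;>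
    subst_vars <;> omega

lemma hp_irr (P : Profile) (tl : List ℕ) (p q : ℕ × ℕ)
    (h1 : higherPri P (lexT (ordOf tl)) p q) (h2 : higherPri P (lexT (ordOf tl)) q p) :
    False := by
  rcases h1 with h | ⟨e, t⟩ <;> rcases h2 with h' | ⟨e', t'⟩
  · omega
  · omega
  · omega
  · exact lexT_asym tl p q t t'

theorem rankedPairsZT_violates_PI :
    ∃ L : ℕ → ℕ → Prop, IsLinOrderUniv L ∧
      ∃ (P P' : Profile) (j x : ℕ),
        x ∈ RPZT L P ∧ AddVoter P P' j x ∧ x ∉ RPZT L P' := by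
  refine ⟨(· < ·), ⟨fun a => lt_irrefl a, fun a b c => Nat.lt_trans, fun a b h => h.lt_or_gt⟩,
    P1, P2, 5, 1, ?_, ?_, ?_⟩
  · -- 1 ∈ RPZT (· < ·) P1
    simp only [RPZT, Finset.mem_filter]
    refine ⟨by decide, 0, by decide, fun j hj hne => Nat.pos_of_ne_zero hne, L1,
      ⟨rpPairs1, pairwise1⟩, ?_⟩
    intro y hy hne
    rw [eval1]
    have hy' : y ∈ ({0,1,2,3} : Finset ℕ) := hy
    fin_cases hy'
    · simp
    · exact absurd rfl hne
    · simp
    · simp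
  · -- AddVoter
    refine ⟨rfl, by decide, by decide, fun i hi a b => Iff.rfl, by decide, ?_⟩
    intro y hy hne
    have hy' : y ∈ ({0,1,2,3} : Finset ℕ) := hy
    fin_cases hy'
    · exact (by decide : P2.ballot 5 1 0)
    · exact absurd rfl hne
    · exact (by decide : P2.ballot 5 1 2)
    · exact (by decide : P2.ballot 5 1 3)
  · -- 1 ∉ RPZT (· < ·) P2
    intro hmem
    simp only [RPZT, Finset.mem_filter] at hmem
    obtain ⟨-, i, hi, hmin, l, ⟨hl1, hl2⟩, hwin⟩ := hmem
    have hi0 : i = 0 := by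
      by_contra h
      have := hmin 0 (by decide) (fun e => h e.symm)
      omega
    subst hi0
    have hbal : P2.ballot 0 = ordOf [2,0,3,1] := rfl
    have hleq : l = L2 := by
      haveI : IsAntisymm (ℕ × ℕ) (higherPri P2 (lexT (P2.ballot 0))) :=
        ⟨fun p q h1 h2 => (hp_irr P2 [2,0,3,1] p q (by rwa [hbal] at h1)
          (by rwa [hbal] at h2)).elim⟩
      have nd1 : l.Nodup := by
        refine hl2.imp ?_
        intro a b h e
        subst e
        exact (hp_irr P2 [2,0,3,1] a a (by rwa [hbal] at h) (by rwa [hbal] at h)).elim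
      have nd2 : L2.Nodup := by decide
      have perm : l.Perm L2 :=
        (List.perm_ext_iff_of_nodup nd1 nd2).2 (fun p => (hl1 p).trans (rpPairs2 p).symm)
      exact List.Perm.eq_of_pairwise (fun p q _ _ h1 h2 => (hp_irr P2 [2,0,3,1] p q
          (by rwa [hbal] at h1) (by rwa [hbal] at h2)).elim) hl2 pairwise2 perm
    subst hleq
    have h10 := hwin 0 (by decide) (by decide)
    rw [eval2] at h10
    simp only [Set.mem_insert_iff, Set.mem_empty_iff_false, or_false, Prod.mk.injEq] at h10
    omega
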